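/- (Lemma 12, Gaussian) Suppose the nonnegative reals R1c, R1p, R2c, R2p are such that (R1c, 0, R1p, R2c, 0, R2p) ∈ R_RHK and the split fully utilizes the interference-free rates, i.e., Rip ≥ ai and Ric ≥ bi for i = 1,2. Then there exist random common rates R1r, R2r ≥ 0 such that (R1c, R1r, R1p, R2c, R2r, R2p) ∈ R_RHK and is self-saturated at both receivers. -/

import Mathlib

open Real

/-- `INRᵖᵢⱼ = min(1, INRᵢⱼ)` if `INRᵢⱼ < SNRᵢ`, and `0` otherwise. -/
noncomputable def INRp (INRij SNRi : ℝ) : ℝ := if INRij < SNRi then min 1 INRij else 0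

/-- `SNRᵖ₁ = SNR₁ · INRᵖ₂₁ / INR₂₁`. -/
noncomputable def SNRp1 (SNR1 SNR2 INR12 INR21 : ℝ) : ℝ :=
  SNR1 * INRp INR21 SNR2 / INR21

/-- `SNRᵖ₂ = SNR₂ · INRᵖ₁₂ / INR₁₂`. -/
noncomputable def SNRp2 (SNR1 SNR2 INR12 INR21 : ℝ) : ℝ :=
  SNR2 * INRp INR12 SNR1 / INR12

/-- Modified MAC constraints at receiver `i` of the Gaussian IC, with parameters
`SNRᵢ`, `INRᵢⱼ`, `INRᵖᵢⱼ`, `SNRᵖᵢ`, on the own common and private rates `Ric, Rip`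
and the other user's common and common-random rates `Rjc, Rjr`
(all logarithms base 2). -/
def gMAC (Si Iij Ipij Spi : ℝ) (Ric Rip Rjc Rjr : ℝ) : Prop :=
  Ric + Rip + Rjc + Rjr ≤ logb 2 (1 + (Si + Iij - Ipij) / (1 + Ipij)) ∧
  Rip + Rjc + Rjr ≤ logb 2 (1 + (Spi + Iij - Ipij) / (1 + Ipij)) ∧
  Rip ≤ logb 2 (1 + Spi / (1 + Ipij)) ∧
  Ric + Rip ≤ logb 2 (1 + Si / (1 + Ipij))

/-- The region `R_RHK`: nonnegative rate tuples `(R1c, R1r, R1p, R2c, R2r, R2p)`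
satisfying the modified MAC constraints at both receivers. -/
noncomputable def gRHK (SNR1 SNR2 INR12 INR21 : ℝ)
    (R1c R1r R1p R2c R2r R2p : ℝ) : Prop :=
  0 ≤ R1c ∧ 0 ≤ R1r ∧ 0 ≤ R1p ∧ 0 ≤ R2c ∧ 0 ≤ R2r ∧ 0 ≤ R2p ∧
  gMAC SNR1 INR12 (INRp INR12 SNR1) (SNRp1 SNR1 SNR2 INR12 INR21) R1c R1p R2c R2r ∧
  gMAC SNR2 INR21 (INRp INR21 SNR2) (SNRp2 SNR1 SNR2 INR12 INR21) R2c R2p R1c R1r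

/-- `Lᵢ = log(1 + SNRᵢ/(1 + INRᵢⱼ))`: rate of user `i` treating interference as noise. -/
noncomputable def gL (Si Iij : ℝ) : ℝ := logb 2 (1 + Si / (1 + Iij))

/-- `aᵢ = log(1 + SNRᵖᵢ/(1 + INRᵢⱼ))`: required private rate of user `i`. -/
noncomputable def ga (Si Iij Spi : ℝ) : ℝ := logb 2 (1 + Spi / (1 + Iij))

/-- `bᵢ = log(1 + (SNRᵢ − SNRᵖᵢ)/(1 + SNRᵖᵢ + INRᵢⱼ))`: required common rate of user `i`. -/
noncomputable def gb (Si Iij Spi : ℝ) : ℝ := logb 2 (1 + (Si - Spi) / (1 + Spi + Iij))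

/-- `Uᵢ`: Gaussian upper bound for user `i` (arguments `SNRᵢ, INRᵢⱼ, SNRⱼ, INRⱼᵢ`). -/
noncomputable def gU (Si Iij Sj Iji : ℝ) : ℝ :=
  min (logb 2 (1 + Si + Iij) -
        logb 2 (1 + max (Sj - max Iji (Sj / Iij)) 0 / (1 + Iji + max Iji (Sj / Iij))))
      (logb 2 (1 + Si))

/-- `C_HK`: rate pairs achievable by non-randomized Han-Kobayashi splits in `R_RHK`. -/
noncomputable def gCHK (SNR1 SNR2 INR12 INR21 : ℝ) (R1 R2 : ℝ) : Prop :=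
  ∃ R1c R1p R2c R2p : ℝ, R1 = R1c + R1p ∧ R2 = R2c + R2p ∧
    gRHK SNR1 SNR2 INR12 INR21 R1c 0 R1p R2c 0 R2p

/-- Self-saturation at receiver 1 of the Gaussian IC. -/
noncomputable def gSelfSat1 (SNR1 SNR2 INR12 INR21 : ℝ) (R1c R1p R2c R2r : ℝ) : Prop :=
  ∀ R1c' R1p' : ℝ, 0 ≤ R1c' → 0 ≤ R1p' → R1c + R1p < R1c' + R1p' →
    ¬ gMAC SNR1 INR12 (INRp INR12 SNR1) (SNRp1 SNR1 SNR2 INR12 INR21) R1c' R1p' R2c R2r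

/-- Self-saturation at receiver 2 of the Gaussian IC. -/
noncomputable def gSelfSat2 (SNR1 SNR2 INR12 INR21 : ℝ) (R2c R2p R1c R1r : ℝ) : Prop :=
  ∀ R2c' R2p' : ℝ, 0 ≤ R2c' → 0 ≤ R2p' → R2c + R2p < R2c' + R2p' →
    ¬ gMAC SNR2 INR21 (INRp INR21 SNR2) (SNRp2 SNR1 SNR2 INR12 INR21) R2c' R2p' R1c R1r

lemma INRp_nonneg (I S : ℝ) (hI : 0 < I) : 0 ≤ INRp I S := by
  unfold INRp; split_ifs
  · exact le_min zero_le_one hI.le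
  · exact le_refl 0

lemma INRp_le (I S : ℝ) (hI : 0 < I) : INRp I S ≤ I := by
  unfold INRp; split_ifs
  · exact min_le_right 1 I
  · exact hI.le

lemma key_log (S I Ip Sp : ℝ) (hIp : 0 ≤ Ip) (hIpI : Ip ≤ I) (hSp : 0 ≤ Sp)
    (hSpS : Sp ≤ S) :
    logb 2 (1 + (Sp + I - Ip) / (1 + Ip)) + gb S I Sp =
      logb 2 (1 + (S + I - Ip) / (1 + Ip)) := by
  have h1 : (0:ℝ) < 1 + Ip := by linarith
  have h2 : (0:ℝ) < 1 + Sp + I := by linarith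
  have h3 : (0:ℝ) < 1 + S + I := by linarith
  have e1 : 1 + (Sp + I - Ip) / (1 + Ip) = (1 + Sp + I) / (1 + Ip) := by
    field_simp; ring
  have e2 : 1 + (S + I - Ip) / (1 + Ip) = (1 + S + I) / (1 + Ip) := by
    field_simp; ring
  have e3 : 1 + (S - Sp) / (1 + Sp + I) = (1 + S + I) / (1 + Sp + I) := by
    field_simp; ring
  unfold gb
  rw [e1, e2, e3, ← Real.logb_mul (by positivity) (by positivity)]
  congr 1
  field_simp

/-- (Lemma 12, Gaussian) If a non-randomized Han-Kobayashi split
`(R1c, 0, R1p, R2c, 0, R2p) ∈ R_RHK` fully utilizes the interference-free rates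
(`Rip ≥ aᵢ`, `Ric ≥ bᵢ`), then there exist random common rates `R1r, R2r ≥ 0` such that
`(R1c, R1r, R1p, R2c, R2r, R2p) ∈ R_RHK` and is self-saturated at both receivers. -/
theorem stmt13 (SNR1 SNR2 INR12 INR21 : ℝ)
    (hS1 : 0 < SNR1) (hS2 : 0 < SNR2) (hI12 : 0 < INR12) (hI21 : 0 < INR21)
    (R1c R1p R2c R2p : ℝ)
    (hRHK : gRHK SNR1 SNR2 INR12 INR21 R1c 0 R1p R2c 0 R2p)
    (ha1 : ga SNR1 INR12 (SNRp1 SNR1 SNR2 INR12 INR21) ≤ R1p)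
    (hb1 : gb SNR1 INR12 (SNRp1 SNR1 SNR2 INR12 INR21) ≤ R1c)
    (ha2 : ga SNR2 INR21 (SNRp2 SNR1 SNR2 INR12 INR21) ≤ R2p)
    (hb2 : gb SNR2 INR21 (SNRp2 SNR1 SNR2 INR12 INR21) ≤ R2c) :
    ∃ R1r R2r : ℝ, 0 ≤ R1r ∧ 0 ≤ R2r ∧
      gRHK SNR1 SNR2 INR12 INR21 R1c R1r R1p R2c R2r R2p ∧
      gSelfSat1 SNR1 SNR2 INR12 INR21 R1c R1p R2c R2r ∧
      gSelfSat2 SNR1 SNR2 INR12 INR21 R2c R2p R1c R1r := by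
  obtain ⟨h1c, -, h1p, h2c, -, h2p, hM1, hM2⟩ := hRHK
  obtain ⟨hA1, hB1, hC1, hD1⟩ := hM1
  obtain ⟨hA2, hB2, hC2, hD2⟩ := hM2
  set Ip12 := INRp INR12 SNR1 with hIp12def
  set Ip21 := INRp INR21 SNR2 with hIp21def
  set Sp1 := SNRp1 SNR1 SNR2 INR12 INR21 with hSp1def
  set Sp2 := SNRp2 SNR1 SNR2 INR12 INR21 with hSp2def
  have hIp12 : 0 ≤ Ip12 := INRp_nonneg _ _ hI12
  have hIp12' : Ip12 ≤ INR12 := INRp_le _ _ hI12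
  have hIp21 : 0 ≤ Ip21 := INRp_nonneg _ _ hI21
  have hIp21' : Ip21 ≤ INR21 := INRp_le _ _ hI21
  have hSp1 : 0 ≤ Sp1 := by
    rw [hSp1def]; unfold SNRp1; positivity
  have hSp1' : Sp1 ≤ SNR1 := by
    rw [hSp1def]; unfold SNRp1
    rw [div_le_iff₀ hI21]
    nlinarith [INRp_le INR21 SNR2 hI21]
  have hSp2 : 0 ≤ Sp2 := by
    rw [hSp2def]; unfold SNRp2; positivity
  have hSp2' : Sp2 ≤ SNR2 := by
    rw [hSp2def]; unfold SNRp2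
    rw [div_le_iff₀ hI12]
    nlinarith [INRp_le INR12 SNR1 hI12]
  have key1 := key_log SNR1 INR12 Ip12 Sp1 hIp12 hIp12' hSp1 hSp1'
  have key2 := key_log SNR2 INR21 Ip21 Sp2 hIp21 hIp21' hSp2 hSp2'
  set C1 := logb 2 (1 + (SNR1 + INR12 - Ip12) / (1 + Ip12)) with hC1def
  set C2 := logb 2 (1 + (SNR2 + INR21 - Ip21) / (1 + Ip21)) with hC2def
  refine ⟨C2 - (R2c + R2p + R1c), C1 - (R1c + R1p + R2c), by linarith, by linarith,
    ⟨h1c, by linarith, h1p, h2c, by linarith, h2p,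
      ⟨by linarith, by simp only [← hIp12def, ← hSp1def]; unfold gb at hb1 key1; linarith, hC1, hD1⟩,
      ⟨by linarith, by simp only [← hIp21def, ← hSp2def]; unfold gb at hb2 key2; linarith, hC2, hD2⟩⟩,
    ?_, ?_⟩
  · intro R1c' R1p' _ _ hlt hmac
    have := hmac.1
    simp only [← hIp12def, ← hSp1def, ← hC1def] at this
    linarith
  · intro R2c' R2p' _ _ hlt hmac
    have := hmac.1
    simp only [← hIp21def, ← hSp2def, ← hC2def] at this
    linarith
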